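/- Let P be a real n×n matrix with P² = P and P ≠ 0 and P ≠ I. Then the operator (spectral) norm satisfies ‖I − P‖₂ = ‖P‖₂. -/

import Mathlib

open Matrix

/-- The four Penrose conditions: `Ap` is the Moore–Penrose pseudoinverse of `A`. -/
def IsMoorePenrose {m n : Type*} [Fintype m] [Fintype n]
    (A : Matrix m n ℝ) (Ap : Matrix n m ℝ) : Prop :=
  A * Ap * A = A ∧ Ap * A * Ap = Ap ∧ (A * Ap)ᵀ = A * Ap ∧ (Ap * A)ᵀ = Ap * A

/-- Spectral (operator) norm of a real matrix, induced by the Euclidean norms. -/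
noncomputable def specNorm {m n : Type*} [Fintype m] [Fintype n] [DecidableEq n]
    (A : Matrix m n ℝ) : ℝ :=
  ‖LinearMap.toContinuousLinearMap (Matrix.toEuclideanLin A)‖

/-- Frobenius norm of a real matrix. -/
noncomputable def frobNorm {m n : Type*} [Fintype m] [Fintype n]
    (A : Matrix m n ℝ) : ℝ :=
  Real.sqrt (∑ i, ∑ j, (A i j) ^ 2)

section key

open RealInnerProductSpace

variable {E : Type*} [NormedAddCommGroup E] [InnerProductSpace ℝ E]

lemma opNorm_one_le_of_idem (f : E →L[ℝ] E) (hf : ∀ x, f (f x) = f x)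
    (hne : ∃ v, f v ≠ 0) : 1 ≤ ‖f‖ := by
  obtain ⟨v, hv⟩ := hne
  have h := f.le_opNorm (f v)
  rw [hf v] at h
  have hv' : 0 < ‖f v‖ := norm_pos_iff.mpr hv
  nlinarith

lemma keyLe (f : E →L[ℝ] E) (hf : ∀ x, f (f x) = f x)
    (hne : ∃ v, f v ≠ 0) (x : E) : ‖x - f x‖ ≤ ‖f‖ * ‖x‖ := by
  have hF1 : 1 ≤ ‖f‖ := opNorm_one_le_of_idem f hf hne
  set z := x - f x with hzdef
  by_cases hz : z = 0
  · rw [hz, norm_zero]; positivity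
  · have ht : 0 < ‖z‖ := norm_pos_iff.mpr hz
    have hx : x ≠ 0 := by
      rintro rfl; exact hz (by simp [hzdef])
    have hs : 0 < ‖x‖ := norm_pos_iff.mpr hx
    set t := ‖z‖ with htdef
    set s := ‖x‖ with hsdef
    set c : ℝ := (⟪x, z⟫) / t with hcdef
    have hxz : ⟪x, z⟫ = c * t := by rw [hcdef, div_mul_cancel₀ _ ht.ne']
    have hfz : f z = 0 := by
      rw [hzdef, map_sub, hf, sub_self]
    set y := x - (c / t) • z with hydef
    have hfy : f y = f x := by
      rw [hydef, map_sub, _root_.map_smul, hfz, smul_zero, sub_zero]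
    have hfxz : f x = x - z := by rw [hzdef]; abel
    have hy2 : ‖y‖ ^ 2 = s ^ 2 - c ^ 2 := by
      rw [hydef, norm_sub_sq_real, real_inner_smul_right, norm_smul, hxz]
      rw [Real.norm_eq_abs, mul_pow, sq_abs]
      field_simp
      ring
    have hfx2 : ‖f x‖ ^ 2 = s ^ 2 - 2 * (c * t) + t ^ 2 := by
      rw [hfxz, norm_sub_sq_real, hxz]
    have hA : ‖f x‖ ≤ ‖f‖ * ‖y‖ := by
      rw [← hfy]; exact f.le_opNorm y
    by_cases hy : y = 0
    · have hfx0 : f x = 0 := by rw [← hfy, hy, map_zero]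
      have hzx : t = s := by rw [htdef, hzdef, hfx0, sub_zero]
      rw [hzx]; nlinarith
    · have hY : 0 < ‖y‖ := norm_pos_iff.mpr hy
      have h1 : ‖f x‖ ^ 2 ≤ ‖f‖ ^ 2 * ‖y‖ ^ 2 := by
        have hf0 : (0:ℝ) ≤ ‖f‖ := norm_nonneg f
        nlinarith [norm_nonneg (f x)]
      have h2 : t ^ 2 * ‖y‖ ^ 2 ≤ s ^ 2 * ‖f x‖ ^ 2 := by
        nlinarith [sq_nonneg (s ^ 2 - c * t)]
      have h3 : t ^ 2 ≤ ‖f‖ ^ 2 * s ^ 2 := by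
        have hY2 : 0 < ‖y‖ ^ 2 := by positivity
        nlinarith [sq_nonneg s]
      have hFs : 0 ≤ ‖f‖ * s := by positivity
      nlinarith

end key

/-- For an idempotent real n×n matrix P with P ≠ 0 and P ≠ I,
the spectral norm satisfies ‖I − P‖₂ = ‖P‖₂. -/
theorem stmt3 {n : ℕ} (P : Matrix (Fin n) (Fin n) ℝ)
    (hidem : P * P = P) (h0 : P ≠ 0) (h1 : P ≠ 1) :
    specNorm ((1 : Matrix (Fin n) (Fin n) ℝ) - P) = specNorm P := by
  set f := LinearMap.toContinuousLinearMap (Matrix.toEuclideanLin P) with hfdef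
  set g := LinearMap.toContinuousLinearMap
    (Matrix.toEuclideanLin ((1 : Matrix (Fin n) (Fin n) ℝ) - P)) with hgdef
  have hg : ∀ x, g x = x - f x := by
    intro x
    show Matrix.toEuclideanLin (1 - P) x = x - Matrix.toEuclideanLin P x
    rw [map_sub]
    simp [Matrix.toEuclideanLin_apply, Matrix.one_mulVec]
  have hf : ∀ x, f (f x) = f x := by
    intro x
    show Matrix.toEuclideanLin P (Matrix.toEuclideanLin P x) = Matrix.toEuclideanLin P x
    conv_rhs => rw [← hidem]
    simp [Matrix.toEuclideanLin_apply, Matrix.mulVec_mulVec]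
  have hinj : Function.Injective (Matrix.toEuclideanLin
      (𝕜 := ℝ) (m := Fin n) (n := Fin n)) := (Matrix.toEuclideanLin).injective
  have hfne : ∃ v, f v ≠ 0 := by
    by_contra h
    push_neg at h
    apply h0
    apply hinj
    rw [map_zero]
    exact LinearMap.ext fun v => h v
  have hgne : ∃ v, g v ≠ 0 := by
    by_contra h
    push_neg at h
    apply h1
    have : (1 : Matrix (Fin n) (Fin n) ℝ) - P = 0 := by
      apply hinj
      rw [map_zero]
      exact LinearMap.ext fun v => h v
    have := sub_eq_zero.mp this
    exact this.symm
  have hgidem : ∀ x, g (g x) = g x := by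
    intro x
    rw [hg, hg x, map_sub, hf]; abel
  have hfg : ∀ x, x - g x = f x := by
    intro x; rw [hg]; abel
  show ‖g‖ = ‖f‖
  apply le_antisymm
  · apply ContinuousLinearMap.opNorm_le_bound _ (norm_nonneg f)
    intro x
    rw [hg x]
    exact keyLe f hf hfne x
  · apply ContinuousLinearMap.opNorm_le_bound _ (norm_nonneg g)
    intro x
    rw [← hfg x]
    exact keyLe g hgidem hgne x
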